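/- arXiv:2405.08996 — 2 statements merged into one kernel-verified Lean document; each statement's English description precedes it below -/
import Mathlib

section
/- Let σ > 0, δ ∈ (0,1), and let (ε_{i,k}), for i ∈ {1,…,m} and k ∈ {1,2,3}, be independent random variables each uniformly distributed on the interval [-σ, σ]. Define σ_j² = (1/3) · Σ_{k=1}^{3} ( (1/m) · Σ_{i=1}^{m} (ε_{i,k} - (1/m) Σ_{i'=1}^{m} ε_{i',k})² ). Then with probability at least 1 - δ, |σ_j² - σ²/3| ≤ 4σ² · √( (2/(3m)) · log(2/δ) ). -/
open MeasureTheory ProbabilityTheory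

section AuxHoeffding

open Real

variable {Ω : Type*} [MeasurableSpace Ω] {P : Measure Ω} [IsProbabilityMeasure P]

lemma integrable_of_abs_le {X : Ω → ℝ} (hX : AEStronglyMeasurable X P) {c : ℝ}
    (hb : ∀ᵐ ω ∂P, |X ω| ≤ c) : Integrable X P :=
  (integrable_const c).mono' hX (by simpa using hb)

lemma integrable_exp_mul_of_abs_le {X : Ω → ℝ} (hX : Measurable X) {c : ℝ}
    (hb : ∀ᵐ ω ∂P, |X ω| ≤ c) (s : ℝ) :
    Integrable (fun ω => Real.exp (s * X ω)) P := by
  refine (integrable_const (Real.exp (|s| * c))).mono'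
    ((hX.const_mul s).exp.aestronglyMeasurable) ?_
  filter_upwards [hb] with ω hω
  rw [Real.norm_eq_abs, Real.abs_exp, Real.exp_le_exp]
  calc s * X ω ≤ |s * X ω| := le_abs_self _
    _ = |s| * |X ω| := abs_mul _ _
    _ ≤ |s| * c := mul_le_mul_of_nonneg_left hω (abs_nonneg s)

/-- A crude version of Hoeffding's lemma: if `|X| ≤ c` a.s. and `E[X] = 0`, then
`mgf X P s ≤ exp (s^2 * c^2 / 2)`. -/
lemma mgf_le_of_abs_le {X : Ω → ℝ} (hX : Measurable X) {c : ℝ} (hc : 0 < c)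
    (hb : ∀ᵐ ω ∂P, |X ω| ≤ c) (hmean : ∫ ω, X ω ∂P = 0) (s : ℝ) :
    mgf X P s ≤ Real.exp (s ^ 2 * c ^ 2 / 2) := by
  have hXint : Integrable X P := integrable_of_abs_le hX.aestronglyMeasurable hb
  have hptwise : ∀ᵐ ω ∂P, Real.exp (s * X ω)
      ≤ Real.cosh (s * c) + (X ω / c) * Real.sinh (s * c) := by
    filter_upwards [hb] with ω hω
    have h1 : -c ≤ X ω := neg_le_of_abs_le hω
    have h2 : X ω ≤ c := le_of_abs_le hω
    set a : ℝ := (c - X ω) / (2 * c) with ha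
    have ha0 : 0 ≤ a := div_nonneg (by linarith) (by positivity)
    have hb0 : (0:ℝ) ≤ 1 - a := by
      have : a ≤ 1 := by rw [ha, div_le_one (by positivity)]; linarith
      linarith
    have hab : a + (1 - a) = 1 := by ring
    have hconv := convexOn_exp.2 (Set.mem_univ (-(s*c))) (Set.mem_univ (s*c)) ha0 hb0 hab
    have hcomb : a • (-(s * c)) + (1 - a) • (s * c) = s * X ω := by
      simp only [smul_eq_mul, ha]; field_simp; ring
    rw [hcomb] at hconv
    refine hconv.trans_eq ?_
    simp only [smul_eq_mul, Real.cosh_eq, Real.sinh_eq, Real.exp_neg, ha]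
    field_simp
    ring
  have hRHSint : Integrable (fun ω => Real.cosh (s * c) + (X ω / c) * Real.sinh (s * c)) P := by
    exact (integrable_const _).add ((hXint.div_const c).mul_const _)
  have hint : Integrable (fun ω => Real.exp (s * X ω)) P :=
    integrable_exp_mul_of_abs_le hX hb s
  calc mgf X P s = ∫ ω, Real.exp (s * X ω) ∂P := rfl
    _ ≤ ∫ ω, (Real.cosh (s * c) + (X ω / c) * Real.sinh (s * c)) ∂P :=
        integral_mono_ae hint hRHSint hptwise
    _ = Real.cosh (s * c) := by
        rw [integral_add (integrable_const _) ((hXint.div_const c).mul_const _),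
          integral_const, integral_mul_const, integral_div, hmean]
        simp
    _ ≤ Real.exp ((s * c) ^ 2 / 2) := Real.cosh_le_exp_half_sq _
    _ = Real.exp (s ^ 2 * c ^ 2 / 2) := by rw [mul_pow]

/-- One-sided Hoeffding inequality for sums of independent, centered, a.s. bounded
random variables. -/
lemma hoeffding_ge {ι : Type*} {X : ι → Ω → ℝ}
    (hind : iIndepFun X P)
    (hXm : ∀ i, Measurable (X i)) {c : ℝ} (hc : 0 < c)
    (hb : ∀ i, ∀ᵐ ω ∂P, |X i ω| ≤ c) (hmean : ∀ i, ∫ ω, X i ω ∂P = 0)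
    (s : Finset ι) {b : ℝ} (hb0 : 0 ≤ b) :
    (P {ω | b ≤ ∑ i ∈ s, X i ω}).toReal
      ≤ Real.exp (-(b ^ 2) / (2 * s.card * c ^ 2)) := by
  rcases Nat.eq_zero_or_pos s.card with hcard | hcard
  · simp only [hcard, Nat.cast_zero, mul_zero, zero_mul, div_zero, Real.exp_zero]
    exact (ENNReal.toReal_le_toReal (measure_ne_top _ _) (measure_ne_top _ _)).2
      (measure_mono (Set.subset_univ _)) |>.trans (by simp)
  · set n : ℝ := (s.card : ℝ) with hn
    have hn0 : 0 < n := by rw [hn]; exact_mod_cast hcard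
    set t : ℝ := b / (n * c ^ 2) with htdef
    have ht0 : 0 ≤ t := div_nonneg hb0 (by positivity)
    have hint : ∀ i ∈ s, Integrable (fun ω => Real.exp (t * X i ω)) P :=
      fun i _ => integrable_exp_mul_of_abs_le (hXm i) (hb i) t
    have hintS : Integrable (fun ω => Real.exp (t * (∑ i ∈ s, X i) ω)) P :=
      hind.integrable_exp_mul_sum hXm hint
    have hchern := measure_ge_le_exp_mul_mgf (μ := P) (X := ∑ i ∈ s, X i) b ht0 hintS
    have hmgf : mgf (∑ i ∈ s, X i) P t ≤ Real.exp (n * (t ^ 2 * c ^ 2 / 2)) := by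
      rw [hind.mgf_sum hXm s]
      calc ∏ i ∈ s, mgf (X i) P t ≤ ∏ i ∈ s, Real.exp (t ^ 2 * c ^ 2 / 2) :=
            Finset.prod_le_prod (fun i _ => mgf_nonneg)
              (fun i _ => mgf_le_of_abs_le (hXm i) hc (hb i) (hmean i) t)
        _ = Real.exp (n * (t ^ 2 * c ^ 2 / 2)) := by
            rw [Finset.prod_const, ← Real.exp_nat_mul, hn]
    have hset : {ω | b ≤ ∑ i ∈ s, X i ω} = {ω | b ≤ (∑ i ∈ s, X i) ω} := by
      simp [Finset.sum_apply]
    calc (P {ω | b ≤ ∑ i ∈ s, X i ω}).toReal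
        ≤ Real.exp (-t * b) * mgf (∑ i ∈ s, X i) P t := by rw [hset]; exact hchern
      _ ≤ Real.exp (-t * b) * Real.exp (n * (t ^ 2 * c ^ 2 / 2)) := by
          exact mul_le_mul_of_nonneg_left hmgf (Real.exp_pos _).le
      _ = Real.exp (-t * b + n * (t ^ 2 * c ^ 2 / 2)) := (Real.exp_add _ _).symm
      _ = Real.exp (-(b ^ 2) / (2 * n * c ^ 2)) := by
          congr 1
          rw [htdef]
          field_simp
          ring

/-- Two-sided Hoeffding inequality, with the measure in `ℝ≥0∞`. -/
lemma hoeffding_abs {ι : Type*} {X : ι → Ω → ℝ}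
    (hind : iIndepFun X P)
    (hXm : ∀ i, Measurable (X i)) {c : ℝ} (hc : 0 < c)
    (hb : ∀ i, ∀ᵐ ω ∂P, |X i ω| ≤ c) (hmean : ∀ i, ∫ ω, X i ω ∂P = 0)
    (s : Finset ι) {b : ℝ} (hb0 : 0 ≤ b) :
    P {ω | b ≤ |∑ i ∈ s, X i ω|}
      ≤ ENNReal.ofReal (2 * Real.exp (-(b ^ 2) / (2 * s.card * c ^ 2))) := by
  have hsub : {ω | b ≤ |∑ i ∈ s, X i ω|}
      ⊆ {ω | b ≤ ∑ i ∈ s, X i ω} ∪ {ω | b ≤ ∑ i ∈ s, (-X i) ω} := by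
    intro ω hω
    rcases abs_cases (∑ i ∈ s, X i ω) with ⟨h, _⟩ | ⟨h, _⟩
    · left; simp only [Set.mem_setOf_eq] at hω ⊢; rw [h] at hω; exact hω
    · right
      simp only [Set.mem_setOf_eq, Pi.neg_apply, Finset.sum_neg_distrib] at hω ⊢
      rw [h] at hω; linarith
  have hindneg : iIndepFun (fun i => -X i) P := by
    have := hind.comp (fun _ : ι => (fun x : ℝ => -x)) (fun _ => measurable_neg)
    exact this
  have h1 := hoeffding_ge hind hXm hc hb hmean s hb0
  have h2 := hoeffding_ge (X := fun i => -X i) hindneg (fun i => (hXm i).neg) hc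
    (fun i => by filter_upwards [hb i] with ω hω; simpa using hω)
    (fun i => by simp [integral_neg, hmean i]) s hb0
  calc P {ω | b ≤ |∑ i ∈ s, X i ω|}
      ≤ P {ω | b ≤ ∑ i ∈ s, X i ω} + P {ω | b ≤ ∑ i ∈ s, (-X i) ω} :=
        (measure_mono hsub).trans (measure_union_le _ _)
    _ ≤ ENNReal.ofReal (Real.exp (-(b ^ 2) / (2 * s.card * c ^ 2)))
        + ENNReal.ofReal (Real.exp (-(b ^ 2) / (2 * s.card * c ^ 2))) := by
        gcongr
        · rw [← ENNReal.ofReal_toReal (measure_ne_top P _)]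
          exact ENNReal.ofReal_le_ofReal h1
        · rw [← ENNReal.ofReal_toReal (measure_ne_top P _)]
          exact ENNReal.ofReal_le_ofReal h2
    _ = ENNReal.ofReal (2 * Real.exp (-(b ^ 2) / (2 * s.card * c ^ 2))) := by
        rw [← ENNReal.ofReal_add (Real.exp_pos _).le (Real.exp_pos _).le]
        ring_nf

section Uniform

variable {σ : ℝ}

lemma unif_ae_mem {X : Ω → ℝ} (hX : Measurable X) (hσ : 0 < σ)
    (hu : P.map X = (volume (Set.Icc (-σ) σ))⁻¹ • volume.restrict (Set.Icc (-σ) σ)) :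
    ∀ᵐ ω ∂P, X ω ∈ Set.Icc (-σ) σ := by
  have hms : MeasurableSet (Set.Icc (-σ) σ)ᶜ := measurableSet_Icc.compl
  have h0 : P (X ⁻¹' (Set.Icc (-σ) σ)ᶜ) = 0 := by
    rw [← Measure.map_apply hX hms, hu]
    simp [Measure.restrict_apply hms]
  have : ∀ᵐ ω ∂P, ω ∉ X ⁻¹' (Set.Icc (-σ) σ)ᶜ := by
    exact (MeasureTheory.measure_eq_zero_iff_ae_notMem).mp h0
  filter_upwards [this] with ω hω
  simpa using hω

lemma unif_integral_pow {X : Ω → ℝ} (hX : Measurable X) (hσ : 0 < σ)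
    (hu : P.map X = (volume (Set.Icc (-σ) σ))⁻¹ • volume.restrict (Set.Icc (-σ) σ)) (n : ℕ) :
    ∫ ω, (X ω) ^ n ∂P = (2 * σ)⁻¹ * ((σ ^ (n+1) - (-σ) ^ (n+1)) / (n+1)) := by
  have hvol : volume (Set.Icc (-σ) σ) = ENNReal.ofReal (2 * σ) := by
    rw [Real.volume_Icc]; ring_nf
  have hmap : ∫ ω, (X ω) ^ n ∂P = ∫ x, x ^ n ∂(P.map X) := by
    rw [MeasureTheory.integral_map hX.aemeasurable]
    exact (measurable_id.pow_const n).aestronglyMeasurable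
  rw [hmap, hu, integral_smul_measure, hvol]
  rw [ENNReal.toReal_inv, ENNReal.toReal_ofReal (by positivity)]
  have : ∫ x in Set.Icc (-σ) σ, x ^ n = (σ ^ (n+1) - (-σ) ^ (n+1)) / (n+1) := by
    rw [MeasureTheory.integral_Icc_eq_integral_Ioc,
      ← intervalIntegral.integral_of_le (by linarith)]
    rw [integral_pow]
  rw [this, smul_eq_mul]

lemma unif_integral_self {X : Ω → ℝ} (hX : Measurable X) (hσ : 0 < σ)
    (hu : P.map X = (volume (Set.Icc (-σ) σ))⁻¹ • volume.restrict (Set.Icc (-σ) σ)) :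
    ∫ ω, X ω ∂P = 0 := by
  have := unif_integral_pow hX hσ hu 1
  simpa using this

lemma unif_integral_sq {X : Ω → ℝ} (hX : Measurable X) (hσ : 0 < σ)
    (hu : P.map X = (volume (Set.Icc (-σ) σ))⁻¹ • volume.restrict (Set.Icc (-σ) σ)) :
    ∫ ω, (X ω) ^ 2 ∂P = σ ^ 2 / 3 := by
  have h := unif_integral_pow hX hσ hu 2
  rw [h]
  have : ((-σ:ℝ)) ^ 3 = -(σ^3) := by ring
  field_simp
  ring

end Uniform

lemma emp_var_eq {m : ℕ} (hm : (m:ℝ) ≠ 0) (v : Fin m → ℝ) :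
    (1/(m:ℝ)) * ∑ i, (v i - (1/(m:ℝ)) * ∑ i', v i')^2
      = (1/(m:ℝ)) * ∑ i, (v i)^2 - ((1/(m:ℝ)) * ∑ i', v i')^2 := by
  set S := ∑ i', v i' with hS
  have h : ∑ i, (v i - (1/(m:ℝ)) * S)^2
      = ∑ i, (v i)^2 - 2*((1/(m:ℝ))*S)*S + (m:ℝ) * ((1/(m:ℝ))*S)^2 := by
    rw [Finset.sum_congr rfl
      (g := fun i => (v i)^2 - 2*((1/(m:ℝ))*S)*(v i) + ((1/(m:ℝ))*S)^2) (fun i _ => by ring)]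
    rw [Finset.sum_add_distrib, Finset.sum_sub_distrib, ← Finset.mul_sum, Finset.sum_const,
      Finset.card_univ, Fintype.card_fin, nsmul_eq_mul, ← hS]
  rw [h]
  field_simp
  ring

lemma pointwise_bound (σ t : ℝ) (hσ : 0 < σ) (ht : 0 < t) {m : ℕ} (hm : 0 < m)
    (x : Fin m → Fin 3 → ℝ) (hb : ∀ i k, x i k ∈ Set.Icc (-σ) σ)
    (hcase : (1/6 : ℝ) ≤ t ∨
      (|∑ p : Fin m × Fin 3, ((x p.1 p.2)^2 - σ^2/3)| ≤ 6*m*σ^2*t ∧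
       ∀ k : Fin 3, |∑ i, x i k| ≤ m*σ*Real.sqrt (2*t))) :
    |(1/3 : ℝ) * ∑ k : Fin 3,
        ((1/(m:ℝ)) * ∑ i, (x i k - (1/(m:ℝ)) * ∑ i', x i' k)^2) - σ^2/3|
      ≤ 4*σ^2*t := by
  have hm0 : (0:ℝ) < m := by exact_mod_cast hm
  have hmr : (m:ℝ) ≠ 0 := hm0.ne'
  set Q : Fin 3 → ℝ := fun k => (1/(m:ℝ)) * ∑ i, (x i k)^2 with hQdef
  set M : Fin 3 → ℝ := fun k => (1/(m:ℝ)) * ∑ i, x i k with hMdef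
  have hE : (1/3 : ℝ) * ∑ k : Fin 3,
      ((1/(m:ℝ)) * ∑ i, (x i k - (1/(m:ℝ)) * ∑ i', x i' k)^2)
      = ((1/3) * ∑ k : Fin 3, Q k) - (1/3) * ∑ k : Fin 3, (M k)^2 := by
    have : ∀ k : Fin 3, (1/(m:ℝ)) * ∑ i, (x i k - (1/(m:ℝ)) * ∑ i', x i' k)^2
        = Q k - (M k)^2 := fun k => emp_var_eq hmr (fun i => x i k)
    rw [Finset.sum_congr rfl (fun k _ => this k), Finset.sum_sub_distrib]
    ring
  have hsq_le : ∀ i k, (x i k)^2 ≤ σ^2 := fun i k =>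
    sq_le_sq' (hb i k).1 (hb i k).2
  have hQ_le : ∀ k, Q k ≤ σ^2 := by
    intro k
    rw [hQdef]
    have : ∑ i, (x i k)^2 ≤ ∑ _i : Fin m, σ^2 :=
      Finset.sum_le_sum fun i _ => hsq_le i k
    rw [Finset.sum_const, Finset.card_univ, Fintype.card_fin, nsmul_eq_mul] at this
    calc (1/(m:ℝ)) * ∑ i, (x i k)^2 ≤ (1/(m:ℝ)) * ((m:ℝ) * σ^2) := by
          apply mul_le_mul_of_nonneg_left this (by positivity)
      _ = σ^2 := by field_simp
  have hMsq_nonneg : (0:ℝ) ≤ ∑ k : Fin 3, (M k)^2 :=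
    Finset.sum_nonneg fun k _ => sq_nonneg _
  have hE_nonneg : (0:ℝ) ≤ (1/3 : ℝ) * ∑ k : Fin 3,
      ((1/(m:ℝ)) * ∑ i, (x i k - (1/(m:ℝ)) * ∑ i', x i' k)^2) := by
    apply mul_nonneg (by norm_num)
    apply Finset.sum_nonneg fun k _ => ?_
    apply mul_nonneg (by positivity)
    exact Finset.sum_nonneg fun i _ => sq_nonneg _
  rcases hcase with hdet | ⟨hA, hM⟩
  · -- deterministic case
    have hQs : (1/3 : ℝ) * ∑ k : Fin 3, Q k ≤ σ^2 := by
      have : ∑ k : Fin 3, Q k ≤ ∑ _k : Fin 3, σ^2 := Finset.sum_le_sum fun k _ => hQ_le k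
      simp only [Finset.sum_const, Finset.card_univ, Fintype.card_fin, nsmul_eq_mul] at this
      norm_num at this
      linarith
    have hE_le : (1/3 : ℝ) * ∑ k : Fin 3,
        ((1/(m:ℝ)) * ∑ i, (x i k - (1/(m:ℝ)) * ∑ i', x i' k)^2) ≤ σ^2 := by
      rw [hE]; linarith
    have h4 : 4*σ^2*(1/6 : ℝ) ≤ 4*σ^2*t := by
      apply mul_le_mul_of_nonneg_left hdet (by positivity)
    have hσ2 : (0:ℝ) ≤ σ^2 := sq_nonneg σ
    rw [abs_le]
    constructor <;> linarith
  · -- probabilistic case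
    have ht2 : (0:ℝ) ≤ 2*t := by linarith
    have hsum_prod : ∑ p : Fin m × Fin 3, ((x p.1 p.2)^2 - σ^2/3)
        = (m:ℝ) * ((∑ k : Fin 3, Q k) - σ^2) := by
      rw [Fintype.sum_prod_type]
      have : ∀ i : Fin m, ∑ k : Fin 3, ((x i k)^2 - σ^2/3)
          = (∑ k : Fin 3, (x i k)^2) - σ^2 := by
        intro i
        rw [Finset.sum_sub_distrib]
        simp only [Finset.sum_const, Finset.card_univ, Fintype.card_fin, nsmul_eq_mul]
        ring
      rw [Finset.sum_congr rfl (fun i _ => this i), Finset.sum_sub_distrib, Finset.sum_comm,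
        Finset.sum_const, Finset.card_univ, Fintype.card_fin, nsmul_eq_mul, mul_sub,
        Finset.mul_sum]
      congr 1
      exact Finset.sum_congr rfl fun k _ => by simp only [hQdef]; field_simp
    have hQsum : |(∑ k : Fin 3, Q k) - σ^2| ≤ 6*σ^2*t := by
      have : |(m:ℝ) * ((∑ k : Fin 3, Q k) - σ^2)| ≤ 6*(m:ℝ)*σ^2*t := by
        rw [← hsum_prod]; exact hA
      rw [abs_mul, abs_of_pos hm0] at this
      calc |(∑ k : Fin 3, Q k) - σ^2| = ((m:ℝ) * |(∑ k : Fin 3, Q k) - σ^2|)/(m:ℝ) := by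
            field_simp
        _ ≤ (6*(m:ℝ)*σ^2*t)/(m:ℝ) := by gcongr
        _ = 6*σ^2*t := by field_simp
    have hMk : ∀ k : Fin 3, (M k)^2 ≤ 2*σ^2*t := by
      intro k
      have habs : |M k| ≤ σ * Real.sqrt (2*t) := by
        rw [hMdef]
        simp only [abs_mul, abs_of_pos (by positivity : (0:ℝ) < 1/(m:ℝ))]
        calc (1/(m:ℝ)) * |∑ i, x i k| ≤ (1/(m:ℝ)) * ((m:ℝ)*σ*Real.sqrt (2*t)) :=
              mul_le_mul_of_nonneg_left (hM k) (by positivity)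
          _ = σ * Real.sqrt (2*t) := by field_simp
      have := sq_le_sq' (neg_le_of_abs_le habs) (le_of_abs_le habs)
      calc (M k)^2 ≤ (σ * Real.sqrt (2*t))^2 := this
        _ = σ^2 * (2*t) := by
            rw [mul_pow, Real.sq_sqrt ht2]
        _ = 2*σ^2*t := by ring
    have hMsum : ∑ k : Fin 3, (M k)^2 ≤ 6*σ^2*t := by
      have : ∑ k : Fin 3, (M k)^2 ≤ ∑ _k : Fin 3, 2*σ^2*t :=
        Finset.sum_le_sum fun k _ => hMk k
      simp only [Finset.sum_const, Finset.card_univ, Fintype.card_fin, nsmul_eq_mul] at this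
      push_cast at this
      linarith
    rw [hE, abs_le]
    obtain ⟨hQ1, hQ2⟩ := abs_le.mp hQsum
    constructor <;> linarith

end AuxHoeffding

/-- Lemma on the concentration of the averaged empirical variance of
3m i.i.d. uniform random variables on `[-σ, σ]`. -/
theorem empirical_variance_concentration
    (σ δ : ℝ) (hσ : 0 < σ) (hδ₀ : 0 < δ) (hδ₁ : δ < 1)
    (m : ℕ) (hm : 0 < m)
    (Ω : Type*) [MeasurableSpace Ω] (P : Measure Ω) [IsProbabilityMeasure P]
    (ε : Fin m → Fin 3 → Ω → ℝ)
    (hmeas : ∀ i k, Measurable (ε i k))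
    (hindep : iIndepFun
      (fun p : Fin m × Fin 3 => ε p.1 p.2) P)
    (hunif : ∀ i k, P.map (ε i k)
      = (volume (Set.Icc (-σ) σ))⁻¹ • volume.restrict (Set.Icc (-σ) σ)) :
    P {ω | |(1 / 3 : ℝ) * ∑ k : Fin 3,
        ((1 / (m : ℝ)) * ∑ i : Fin m,
          (ε i k ω - (1 / (m : ℝ)) * ∑ i' : Fin m, ε i' k ω) ^ 2)
        - σ ^ 2 / 3|
      ≤ 4 * σ ^ 2 * Real.sqrt ((2 / (3 * (m : ℝ))) * Real.log (2 / δ))}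
    ≥ ENNReal.ofReal (1 - δ) := by
  classical
  have hm0 : (0:ℝ) < m := by exact_mod_cast hm
  set L : ℝ := Real.log (2/δ) with hLdef
  have hL0 : 0 < L := Real.log_pos (by rw [lt_div_iff₀ hδ₀]; linarith)
  have hexpL : Real.exp L = 2/δ := Real.exp_log (by positivity)
  set t : ℝ := Real.sqrt ((2/(3*(m:ℝ))) * L) with htdef
  have ht0 : 0 < t := Real.sqrt_pos.mpr (by positivity)
  have ht2 : t^2 = (2/(3*(m:ℝ))) * L := Real.sq_sqrt (by positivity)
  set G : Set Ω := {ω | |(1 / 3 : ℝ) * ∑ k : Fin 3,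
        ((1 / (m : ℝ)) * ∑ i : Fin m,
          (ε i k ω - (1 / (m : ℝ)) * ∑ i' : Fin m, ε i' k ω) ^ 2)
        - σ ^ 2 / 3| ≤ 4 * σ ^ 2 * t} with hGdef
  have hbnd : ∀ (i : Fin m) (k : Fin 3), ∀ᵐ ω ∂P, ε i k ω ∈ Set.Icc (-σ) σ :=
    fun i k => unif_ae_mem (hmeas i k) hσ (hunif i k)
  have hgood : ∀ᵐ ω ∂P, ∀ i k, ε i k ω ∈ Set.Icc (-σ) σ :=
    (MeasureTheory.ae_all_iff).2 fun i => (MeasureTheory.ae_all_iff).2 fun k => hbnd i k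
  by_cases hdet : (1/6 : ℝ) ≤ t
  · have hae : ∀ᵐ ω ∂P, ω ∈ G := by
      filter_upwards [hgood] with ω hω
      exact pointwise_bound σ t hσ ht0 hm (fun i k => ε i k ω) hω (Or.inl hdet)
    have hcompl : P Gᶜ = 0 := by
      have := MeasureTheory.ae_iff.mp hae
      simpa [Set.compl_def] using this
    have h1 : (1:ENNReal) ≤ P G := by
      have := measure_union_le (μ := P) G Gᶜ
      rw [Set.union_compl_self, measure_univ, hcompl, add_zero] at this
      exact this
    calc ENNReal.ofReal (1 - δ) ≤ ENNReal.ofReal 1 := ENNReal.ofReal_le_ofReal (by linarith)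
      _ = 1 := ENNReal.ofReal_one
      _ ≤ P G := h1
  · push_neg at hdet
    -- event A : sum of squares
    set Y : Fin m × Fin 3 → Ω → ℝ := fun p ω => (ε p.1 p.2 ω)^2 - σ^2/3 with hYdef
    have hYind : iIndepFun Y P := by
      have := hindep.comp (fun _ : Fin m × Fin 3 => (fun x : ℝ => x^2 - σ^2/3))
        (fun _ => (measurable_id.pow_const 2).sub_const _)
      exact this
    have hYm : ∀ p, Measurable (Y p) :=
      fun p => ((hmeas p.1 p.2).pow_const 2).sub_const _
    have hc : (0:ℝ) < 2*σ^2/3 := by positivity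
    have hYb : ∀ p, ∀ᵐ ω ∂P, |Y p ω| ≤ 2*σ^2/3 := by
      intro p
      filter_upwards [hbnd p.1 p.2] with ω hω
      have h1 : (ε p.1 p.2 ω)^2 ≤ σ^2 := sq_le_sq' hω.1 hω.2
      have h2 : (0:ℝ) ≤ (ε p.1 p.2 ω)^2 := sq_nonneg _
      have hσ2 : (0:ℝ) ≤ σ^2 := sq_nonneg σ
      rw [abs_le]; constructor <;> simp only [hYdef] <;> linarith
    have hYmean : ∀ p, ∫ ω, Y p ω ∂P = 0 := by
      intro p
      have hint : Integrable (fun ω => (ε p.1 p.2 ω)^2) P := by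
        refine integrable_of_abs_le ((hmeas p.1 p.2).pow_const 2).aestronglyMeasurable
          (c := σ^2) ?_
        filter_upwards [hbnd p.1 p.2] with ω hω
        rw [abs_of_nonneg (sq_nonneg _)]
        exact sq_le_sq' hω.1 hω.2
      simp only [hYdef]
      rw [integral_sub hint (integrable_const _), integral_const]
      rw [unif_integral_sq (hmeas p.1 p.2) hσ (hunif p.1 p.2)]
      simp
    set bA : ℝ := 6*(m:ℝ)*σ^2*t with hbAdef
    have hbA0 : 0 ≤ bA := by positivity
    have hHA' := hoeffding_abs hYind hYm hc hYb hYmean Finset.univ hbA0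
    have hHA : P {ω | bA ≤ |∑ p : Fin m × Fin 3, Y p ω|} ≤ ENNReal.ofReal (2*(δ/2)^9) := by
      refine hHA'.trans (ENNReal.ofReal_le_ofReal ?_)
      have hcardA : ((Finset.univ : Finset (Fin m × Fin 3)).card : ℝ) = 3*(m:ℝ) := by
        simp [Finset.card_univ]
        ring
      have harg : -(bA^2) / (2 * ((Finset.univ : Finset (Fin m × Fin 3)).card : ℝ)
          * (2*σ^2/3)^2) = -(9*L) := by
        rw [hcardA, hbAdef]
        have hmt : (m:ℝ) * t^2 = 2*L/3 := by rw [ht2]; field_simp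
        have hσne : σ ≠ 0 := hσ.ne'
        have hmne : (m:ℝ) ≠ 0 := hm0.ne'
        field_simp
        nlinarith [hmt, sq_nonneg σ]
      rw [harg]
      have : Real.exp (-(9*L)) = (δ/2)^9 := by
        rw [show -(9*L) = (9:ℕ) * (-L) by push_cast; ring, Real.exp_nat_mul,
          Real.exp_neg, hexpL, inv_div]
      rw [this]
    -- events for the per-coordinate means
    set bk : ℝ := (m:ℝ)*σ*Real.sqrt (2*t) with hbkdef
    have hbk0 : 0 ≤ bk := by positivity
    have hmt4 : 4*L ≤ (m:ℝ)*t := by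
      have hmt : ((m:ℝ)*t)*t = 2*L/3 := by
        rw [mul_assoc, ← pow_two t, ht2]; field_simp
      rw [← mul_le_mul_iff_of_pos_right ht0]
      calc 4*L*t ≤ 4*L*(1/6) := mul_le_mul_of_nonneg_left hdet.le (by positivity)
        _ = 2*L/3 := by ring
        _ = ((m:ℝ)*t)*t := hmt.symm
    have hHk : ∀ k : Fin 3, P {ω | bk ≤ |∑ i : Fin m, ε i k ω|}
        ≤ ENNReal.ofReal (2*(δ/2)^4) := by
      intro k
      set ek : Fin m ↪ Fin m × Fin 3 :=
        ⟨fun i => (i, k), fun a b h => by simpa using congrArg Prod.fst h⟩ with hekdef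
      have hb' : ∀ p : Fin m × Fin 3, ∀ᵐ ω ∂P, |ε p.1 p.2 ω| ≤ σ := by
        intro p
        filter_upwards [hbnd p.1 p.2] with ω hω
        exact abs_le.mpr hω
      have hmean' : ∀ p : Fin m × Fin 3, ∫ ω, ε p.1 p.2 ω ∂P = 0 :=
        fun p => unif_integral_self (hmeas p.1 p.2) hσ (hunif p.1 p.2)
      have hs := hoeffding_abs hindep (fun p => hmeas p.1 p.2) hσ hb' hmean'
        (Finset.univ.map ek) hbk0
      have hseteq : {ω | bk ≤ |∑ p ∈ Finset.univ.map ek, ε p.1 p.2 ω|}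
          = {ω | bk ≤ |∑ i : Fin m, ε i k ω|} := by
        ext ω
        simp [Finset.sum_map, hekdef]
        exact Iff.rfl
      have hcard : ((Finset.univ.map ek).card : ℝ) = (m:ℝ) := by
        simp [Finset.card_map, Finset.card_univ]
      rw [hseteq] at hs
      refine hs.trans (ENNReal.ofReal_le_ofReal ?_)
      have hsq : (Real.sqrt (2*t))^2 = 2*t := Real.sq_sqrt (by linarith)
      have hbksq : bk^2 = (m:ℝ)^2*σ^2*(2*t) := by
        rw [hbkdef, mul_pow, mul_pow, hsq]
      have harg : -(bk^2) / (2 * ((Finset.univ.map ek).card : ℝ) * σ^2) = -((m:ℝ)*t) := by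
        rw [hcard, hbksq]
        have hσne : σ ≠ 0 := hσ.ne'
        have hmne : (m:ℝ) ≠ 0 := hm0.ne'
        field_simp
      rw [harg]
      have h1 : Real.exp (-((m:ℝ)*t)) ≤ Real.exp (-(4*L)) :=
        Real.exp_le_exp.mpr (by linarith)
      have h2 : Real.exp (-(4*L)) = (δ/2)^4 := by
        rw [show -(4*L) = (4:ℕ) * (-L) by push_cast; ring, Real.exp_nat_mul,
          Real.exp_neg, hexpL, inv_div]
      rw [← h2]
      linarith
    -- assemble
    set N : Set Ω := {ω | ¬ ∀ i k, ε i k ω ∈ Set.Icc (-σ) σ} with hNdef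
    have hN : P N = 0 := MeasureTheory.ae_iff.mp hgood
    set BA : Set Ω := {ω | bA ≤ |∑ p : Fin m × Fin 3, Y p ω|} with hBAdef
    set Bd : Fin 3 → Set Ω := fun k => {ω | bk ≤ |∑ i : Fin m, ε i k ω|} with hBddef
    have hsub : Gᶜ ⊆ N ∪ (BA ∪ (Bd 0 ∪ (Bd 1 ∪ Bd 2))) := by
      intro ω hω
      by_contra hcon
      simp only [Set.mem_union, not_or] at hcon
      obtain ⟨hn, hba, hb0, hb1, hb2⟩ := hcon
      have hbmem : ∀ i k, ε i k ω ∈ Set.Icc (-σ) σ := by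
        by_contra h; exact hn h
      have hAle : |∑ p : Fin m × Fin 3, ((ε p.1 p.2 ω)^2 - σ^2/3)| ≤ 6*(m:ℝ)*σ^2*t := by
        have hba' : ¬ (bA ≤ |∑ p : Fin m × Fin 3, Y p ω|) := hba
        have := not_le.mp hba'
        simp only [hYdef] at this
        rw [hbAdef] at this
        linarith
      have hMle : ∀ k : Fin 3, |∑ i : Fin m, ε i k ω| ≤ (m:ℝ)*σ*Real.sqrt (2*t) := by
        intro k
        have hb0' : ¬ (bk ≤ |∑ i : Fin m, ε i 0 ω|) := hb0
        have hb1' : ¬ (bk ≤ |∑ i : Fin m, ε i 1 ω|) := hb1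
        have hb2' : ¬ (bk ≤ |∑ i : Fin m, ε i 2 ω|) := hb2
        rw [hbkdef] at hb0' hb1' hb2'
        fin_cases k
        · exact le_of_lt (not_le.mp hb0')
        · exact le_of_lt (not_le.mp hb1')
        · exact le_of_lt (not_le.mp hb2')
      exact hω (pointwise_bound σ t hσ ht0 hm (fun i k => ε i k ω) hbmem
        (Or.inr ⟨hAle, hMle⟩))
    have hGm : MeasurableSet G := by
      rw [hGdef]
      apply measurableSet_le ?_ measurable_const
      apply Measurable.abs
      apply Measurable.sub ?_ measurable_const
      apply Measurable.const_mul
      apply Finset.measurable_sum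
      intro k _
      apply Measurable.const_mul
      apply Finset.measurable_sum
      intro i _
      exact ((hmeas i k).sub ((Finset.measurable_sum _
        (fun i' _ => hmeas i' k)).const_mul _)).pow_const 2
    have hPGc : P Gᶜ ≤ ENNReal.ofReal δ := by
      have h2 : P Gᶜ ≤ P N + (P BA + (P (Bd 0) + (P (Bd 1) + P (Bd 2)))) := by
        refine (measure_mono hsub).trans ?_
        refine (measure_union_le _ _).trans (add_le_add_right ?_ _)
        refine (measure_union_le _ _).trans (add_le_add_right ?_ _)
        refine (measure_union_le _ _).trans (add_le_add_right ?_ _)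
        exact measure_union_le _ _
      rw [hN, zero_add] at h2
      have h3 : P Gᶜ ≤ ENNReal.ofReal (2*(δ/2)^9) + (ENNReal.ofReal (2*(δ/2)^4)
          + (ENNReal.ofReal (2*(δ/2)^4) + ENNReal.ofReal (2*(δ/2)^4))) := by
        refine h2.trans ?_
        gcongr
        · exact hHk 0
        · exact hHk 1
        · exact hHk 2
      have h4 : ENNReal.ofReal (2*(δ/2)^9) + (ENNReal.ofReal (2*(δ/2)^4)
          + (ENNReal.ofReal (2*(δ/2)^4) + ENNReal.ofReal (2*(δ/2)^4)))
          = ENNReal.ofReal (2*(δ/2)^9 + (2*(δ/2)^4 + (2*(δ/2)^4 + 2*(δ/2)^4))) := by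
        rw [← ENNReal.ofReal_add (by positivity) (by positivity),
          ← ENNReal.ofReal_add (by positivity) (by positivity),
          ← ENNReal.ofReal_add (by positivity) (by positivity)]
      have h5 : 2*(δ/2)^9 + (2*(δ/2)^4 + (2*(δ/2)^4 + 2*(δ/2)^4)) ≤ δ := by
        have h9 : δ^9 ≤ δ := pow_le_of_le_one hδ₀.le hδ₁.le (by norm_num)
        have h4' : δ^4 ≤ δ := pow_le_of_le_one hδ₀.le hδ₁.le (by norm_num)
        have e9 : (δ/2)^9 = δ^9/512 := by ring
        have e4 : (δ/2)^4 = δ^4/16 := by ring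
        rw [e9, e4]
        linarith
      refine h3.trans (h4.le.trans (ENNReal.ofReal_le_ofReal h5))
    have hsum1 : P G + P Gᶜ = 1 := (measure_add_measure_compl hGm).trans measure_univ
    rw [ge_iff_le, ENNReal.ofReal_sub 1 hδ₀.le, ENNReal.ofReal_one, tsub_le_iff_right]
    calc (1:ENNReal) = P G + P Gᶜ := hsum1.symm
      _ ≤ P G + ENNReal.ofReal δ := add_le_add_right hPGc _
end

section
/- Let c ∈ (0, 0.03), let σ > 0 and σ_j > 0 with 1 ≤ σ/σ_j ≤ 2, let C be a real number with 1 - 2c ≤ C ≤ 1 + 2c, and let v, r ∈ ℝ³ with ‖r‖ ≤ √3 · σ and ‖v‖ ≤ c · σ_j. Then C³ · exp( -C² · (2 (v · r) + ‖v‖²) / (2σ_j²) ) · exp( -(C² - 1) · ‖r‖² / (2σ_j²) ) ∈ [1 - 100c, 1 + 100c]. -/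
open RealInnerProductSpace

set_option maxHeartbeats 1000000 in
/-- Lemma `close_to_1`: the product of the correction factors lies in
`[1 - 100c, 1 + 100c]`. Here `r` is the ground-truth residual, `v` the pose
estimation error, and `C` the ratio of true to estimated noise scale. -/
theorem close_to_one
    (c σ σj C : ℝ) (hc₀ : 0 < c) (hc₁ : c < 0.03)
    (hσ : 0 < σ) (hσj : 0 < σj) (hratio₁ : 1 ≤ σ / σj) (hratio₂ : σ / σj ≤ 2)
    (hC₁ : 1 - 2 * c ≤ C) (hC₂ : C ≤ 1 + 2 * c)
    (v r : EuclideanSpace ℝ (Fin 3)) (hr : ‖r‖ ≤ Real.sqrt 3 * σ) (hv : ‖v‖ ≤ c * σj) :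
    C ^ 3 * Real.exp (-(C ^ 2 * (2 * ⟪v, r⟫ + ‖v‖ ^ 2)) / (2 * σj ^ 2))
        * Real.exp (-((C ^ 2 - 1) * ‖r‖ ^ 2) / (2 * σj ^ 2))
      ∈ Set.Icc (1 - 100 * c) (1 + 100 * c) := by
  have hC0 : (0.94 : ℝ) ≤ C := by linarith
  have hC06 : C ≤ (1.06 : ℝ) := by linarith
  have hCpos : (0 : ℝ) < C := by linarith
  have hσ2j : σ ≤ 2 * σj := by
    have := (div_le_iff₀ hσj).mp hratio₂; linarith
  have hsqrt3 : Real.sqrt 3 ≤ 1.74 := by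
    rw [show (1.74 : ℝ) = Real.sqrt (1.74 ^ 2) from (Real.sqrt_sq (by norm_num)).symm]
    exact Real.sqrt_le_sqrt (by norm_num)
  have hsqrt3' : (0:ℝ) ≤ Real.sqrt 3 := Real.sqrt_nonneg 3
  have hnr : ‖r‖ ≤ 3.48 * σj := by
    calc ‖r‖ ≤ Real.sqrt 3 * σ := hr
    _ ≤ 1.74 * σ := by nlinarith
    _ ≤ 1.74 * (2 * σj) := by linarith
    _ = 3.48 * σj := by ring
  have hnr0 : (0:ℝ) ≤ ‖r‖ := norm_nonneg r
  have hnv0 : (0:ℝ) ≤ ‖v‖ := norm_nonneg v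
  have hσsq : σ ^ 2 ≤ 4 * σj ^ 2 := by nlinarith
  have hr3 : ‖r‖ ^ 2 ≤ 3 * σ ^ 2 := by
    have hm := mul_le_mul hr hr hnr0 (by positivity : (0:ℝ) ≤ Real.sqrt 3 * σ)
    have hq : Real.sqrt 3 * σ * (Real.sqrt 3 * σ) = 3 * σ ^ 2 := by
      have h3 : Real.sqrt 3 * Real.sqrt 3 = 3 := Real.mul_self_sqrt (by norm_num)
      nlinarith [h3]
    nlinarith [hm, hq]
  have hnr2 : ‖r‖ ^ 2 ≤ 12 * σj ^ 2 := by nlinarith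
  have hnv2 : ‖v‖ ^ 2 ≤ 0.03 * c * σj ^ 2 := by nlinarith
  have hvr : ‖v‖ * ‖r‖ ≤ 3.48 * c * σj ^ 2 := by nlinarith
  have hip := abs_real_inner_le_norm v r
  have hip1 : ⟪v, r⟫ ≤ 3.48 * c * σj ^ 2 := by
    have := (abs_le.mp hip).2; linarith
  have hip2 : -(3.48 * c * σj ^ 2) ≤ ⟪v, r⟫ := by
    have := (abs_le.mp hip).1; linarith
  have hC2u : C ^ 2 ≤ 1 + 4.12 * c := by nlinarith
  have hC2l : 1 - 4 * c ≤ C ^ 2 := by nlinarith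
  have hC2u' : C ^ 2 ≤ 1.1236 := by nlinarith
  have hs2 : (0:ℝ) < 2 * σj ^ 2 := by positivity
  -- combine the exponentials
  rw [mul_assoc, ← Real.exp_add, ← add_div]
  set E := (-(C ^ 2 * (2 * ⟪v, r⟫ + ‖v‖ ^ 2)) + -((C ^ 2 - 1) * ‖r‖ ^ 2)) / (2 * σj ^ 2)
    with hEdef
  have hEu : E ≤ 29 * c := by
    rw [hEdef, div_le_iff₀ hs2]
    nlinarith [mul_nonneg (mul_nonneg hc₀.le hc₀.le) (sq_nonneg σj),
      mul_nonneg hc₀.le (sq_nonneg σj),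
      mul_le_mul_of_nonneg_left hip2 (sq_nonneg C),
      mul_le_mul_of_nonneg_left hnv2 (sq_nonneg C)]
  have hEl : -(29 * c) ≤ E := by
    rw [hEdef, le_div_iff₀ hs2]
    have hA := mul_le_mul_of_nonneg_left hip1 (sq_nonneg C)
    have hB := mul_le_mul_of_nonneg_right hC2u' (by positivity : (0:ℝ) ≤ 3.48 * c * σj ^ 2)
    have hCc := mul_le_mul_of_nonneg_left hnv2 (sq_nonneg C)
    have hD := mul_le_mul_of_nonneg_right hC2u' (by positivity : (0:ℝ) ≤ 0.03 * c * σj ^ 2)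
    have hE := mul_le_mul_of_nonneg_right (show C ^ 2 - 1 ≤ 4.12 * c by linarith) (sq_nonneg ‖r‖)
    have hF := mul_le_mul_of_nonneg_left hnr2 (show (0:ℝ) ≤ 4.12 * c by linarith)
    nlinarith [mul_nonneg hc₀.le (sq_nonneg σj)]
  constructor
  · -- lower bound
    have h1 : (1:ℝ) - 29 * c ≤ Real.exp E := by
      have := Real.add_one_le_exp E; linarith
    have hC3 : (1 - 2*c) ^ 3 ≤ C ^ 3 := by
      apply pow_le_pow_left₀ (by linarith) hC₁
    have h2 : (1 - 2*c) ^ 3 * (1 - 29 * c) ≤ C ^ 3 * Real.exp E :=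
      mul_le_mul hC3 h1 (by linarith) (by positivity)
    nlinarith [mul_nonneg hc₀.le hc₀.le, mul_nonneg (mul_nonneg hc₀.le hc₀.le) hc₀.le,
      mul_nonneg (mul_nonneg (mul_nonneg hc₀.le hc₀.le) hc₀.le) hc₀.le]
  · -- upper bound
    have hd : (0:ℝ) < 1 - 14.5 * c := by linarith
    have h3 : Real.exp (14.5 * c) ≤ 1 / (1 - 14.5 * c) := by
      have h := Real.add_one_le_exp (-(14.5 * c))
      have hx : 1 - 14.5 * c ≤ Real.exp (-(14.5 * c)) := by linarith
      rw [Real.exp_neg] at hx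
      rw [le_div_iff₀ hd] at *
      have hep := Real.exp_pos (14.5 * c)
      calc Real.exp (14.5 * c) * (1 - 14.5 * c)
          ≤ Real.exp (14.5 * c) * (Real.exp (14.5 * c))⁻¹ :=
            mul_le_mul_of_nonneg_left hx hep.le
        _ = 1 := mul_inv_cancel₀ hep.ne'
    have h4 : Real.exp E ≤ (1 / (1 - 14.5 * c)) ^ 2 := by
      have : Real.exp E ≤ Real.exp (29 * c) := Real.exp_le_exp.mpr hEu
      have h29 : Real.exp (29 * c) = Real.exp (14.5 * c) * Real.exp (14.5 * c) := by
        rw [← Real.exp_add]; ring_nf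
      calc Real.exp E ≤ Real.exp (29 * c) := this
        _ = Real.exp (14.5 * c) * Real.exp (14.5 * c) := h29
        _ ≤ (1 / (1 - 14.5 * c)) * (1 / (1 - 14.5 * c)) :=
            mul_le_mul h3 h3 (Real.exp_pos _).le (by positivity)
        _ = (1 / (1 - 14.5 * c)) ^ 2 := by ring
    have hC3u : C ^ 3 ≤ (1 + 2*c) ^ 3 := pow_le_pow_left₀ hCpos.le hC₂ 3
    have h5 : C ^ 3 * Real.exp E ≤ (1 + 2*c) ^ 3 * (1 / (1 - 14.5 * c)) ^ 2 :=
      mul_le_mul hC3u h4 (Real.exp_pos _).le (by positivity)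
    have hpoly : (1 + 2*c) ^ 3 ≤ (1 + 100 * c) * (1 - 14.5 * c) ^ 2 := by
      nlinarith [mul_nonneg hc₀.le (by linarith : (0:ℝ) ≤ 0.03 - c),
        mul_nonneg (mul_nonneg hc₀.le hc₀.le) (by linarith : (0:ℝ) ≤ 0.03 - c)]
    have h6 : (1 + 2*c) ^ 3 * (1 / (1 - 14.5 * c)) ^ 2 ≤ 1 + 100 * c := by
      rw [div_pow, one_pow, mul_one_div, div_le_iff₀ (by positivity : (0:ℝ) < (1 - 14.5*c)^2)]
      linarith [hpoly]
    linarith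
end
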